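/- Let C ⊆ Σ^n be an F-code (a linear subspace) over a finite field F, with an F-linear q-query tester T of soundness μ > 0, and let Δ be a nonzero finite-dimensional F-vector space. Then C admits a linearly Δ-separable F-linear q-query tester with soundness μ/⌈q·dim Σ / dim Δ⌉. -/

import Mathlib

lemma aux_psi {F : Type*} [Field F] {V Del : Type*} [AddCommGroup V] [Module F V]
    [FiniteDimensional F V] [AddCommGroup Del] [Module F Del] [FiniteDimensional F Del]
    (W : Submodule F V) (m : ℕ)
    (h : Module.finrank F V ≤ m * Module.finrank F Del) :
    ∃ ψ : V →ₗ[F] (Fin m → Del), LinearMap.ker ψ = W := by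
  classical
  set r := Module.finrank F Del with hr
  set d := Module.finrank F (V ⧸ W) with hd
  have hdle : d ≤ m * r := le_trans (Submodule.finrank_quotient_le W) h
  let e : (V ⧸ W) ≃ₗ[F] (Fin d → F) := (Module.finBasis F (V ⧸ W)).equivFun
  let ext : (Fin d → F) →ₗ[F] (Fin (m * r) → F) :=
    LinearMap.pi (fun k => if hk : (k : ℕ) < d then LinearMap.proj ⟨k, hk⟩ else 0)
  have hext : Function.Injective ext := by
    intro x y hxy
    funext i
    have := congrFun hxy (⟨i, lt_of_lt_of_le i.2 hdle⟩ : Fin (m * r))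
    simpa [ext, LinearMap.pi_apply, i.2] using this
  let E1 : (Fin m → Del) ≃ₗ[F] (Fin m → Fin r → F) :=
    LinearEquiv.piCongrRight (fun _ => (Module.finBasis F Del).equivFun)
  let E2 : (Fin m × Fin r → F) ≃ₗ[F] (Fin m → Fin r → F) := LinearEquiv.curry F F (Fin m) (Fin r)
  let E3 : (Fin (m * r) → F) ≃ₗ[F] (Fin m × Fin r → F) :=
    LinearEquiv.funCongrLeft F F finProdFinEquiv
  let E : (Fin (m * r) → F) ≃ₗ[F] (Fin m → Del) := (E3.trans E2).trans E1.symm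
  refine ⟨(E : (Fin (m*r) → F) →ₗ[F] (Fin m → Del)) ∘ₗ ext ∘ₗ (e : (V ⧸ W) →ₗ[F] (Fin d → F)) ∘ₗ W.mkQ, ?_⟩
  ext x
  simp only [LinearMap.mem_ker, LinearMap.comp_apply]
  constructor
  · intro hx
    have h1 : ext (e (W.mkQ x)) = 0 := by
      have := E.injective (by simpa using hx)
      simpa using this
    have h2 : e (W.mkQ x) = 0 := hext (by simpa using h1)
    have h3 : W.mkQ x = 0 := e.injective (by simpa using h2)
    simpa [Submodule.Quotient.mk_eq_zero] using h3
  · intro hx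
    have : W.mkQ x = 0 := by simpa [Submodule.Quotient.mk_eq_zero] using hx
    simp [this]

/-- Reduction to a linearly separable tester (Theorem `TH:reduction_to_sep_lin`):
if the `F`-code `C ⊆ Sig^n` has an `F`-linear `q`-query tester of soundness
`μ > 0` (each acceptance set is a linear subspace of `Sig^q`), and `Del` is a
nonzero finite-dimensional `F`-vector space, then `C` admits an `F`-linear
`q`-query tester which is linearly `Del`-separable (each predicate factors
through `F`-linear maps `g_j : Sig → Del`) and has soundness
`μ / ⌈q·dim Sig / dim Del⌉`. -/
theorem stmt_14 {F : Type*} [Field F] [Fintype F]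
    {Sig Del : Type*}
    [AddCommGroup Sig] [Module F Sig] [FiniteDimensional F Sig]
    [Fintype Sig] [DecidableEq Sig]
    [AddCommGroup Del] [Module F Del] [FiniteDimensional F Del]
    (hSig : 0 < Module.finrank F Sig) (hDel : 0 < Module.finrank F Del)
    {n q : ℕ} (hn : 0 < n) (hq : 0 < q)
    (C : Submodule F (Fin n → Sig))
    {I : Type*} [Fintype I]
    (p : I → ℝ) (hp0 : ∀ i, 0 ≤ p i) (hp1 : ∑ i, p i = 1)
    (a : I → Fin q → Fin n) (T : I → (Fin q → Sig) → Bool)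
    (hlin : ∀ i, ∃ W : Submodule F (Fin q → Sig), ∀ u, T i u = true ↔ u ∈ W)
    (hcomplete : ∀ w ∈ C, ∀ i, T i (fun j => w (a i j)) = true)
    (μ : ℝ) (hμ : 0 < μ)
    (hsound : ∀ w : Fin n → Sig,
      μ * ((⨅ c : C, hammingDist w (c : Fin n → Sig) : ℕ) : ℝ) / n ≤
        ∑ i with T i (fun j => w (a i j)) = false, p i) :
    ∃ (m : ℕ) (p' : I × Fin m → ℝ) (a' : I × Fin m → Fin q → Fin n)
      (T' : I × Fin m → (Fin q → Sig) → Bool),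
      m = Nat.ceil ((q * Module.finrank F Sig : ℚ) / (Module.finrank F Del : ℚ)) ∧
      (∀ i, 0 ≤ p' i) ∧ (∑ i, p' i = 1) ∧
      (∀ w ∈ C, ∀ i, T' i (fun j => w (a' i j)) = true) ∧
      (∀ i, ∃ W : Submodule F (Fin q → Sig), ∀ u, T' i u = true ↔ u ∈ W) ∧
      (∀ i, ∃ (g : Fin q → (Sig →ₗ[F] Del)) (G : (Fin q → Del) → Bool),
        ∀ u : Fin q → Sig, T' i u = G (fun j => g j (u j))) ∧
      (∀ w : Fin n → Sig,
        μ / m * ((⨅ c : C, hammingDist w (c : Fin n → Sig) : ℕ) : ℝ) / n ≤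
          ∑ i with T' i (fun j => w (a' i j)) = false, p' i) := by
  classical
  set s := Module.finrank F Sig with hs
  set r := Module.finrank F Del with hrdef
  set m := Nat.ceil ((q * s : ℚ) / r) with hmdef
  have hm0 : 0 < m := by
    apply Nat.ceil_pos.mpr
    apply div_pos
    · positivity
    · exact_mod_cast hDel
  have hmR : (0 : ℝ) < m := by exact_mod_cast hm0
  -- q*s ≤ m*r
  have hqsmr : q * s ≤ m * r := by
    have h1 : ((q * s : ℚ) / r) ≤ (m : ℚ) := Nat.le_ceil _
    have hr0 : (0 : ℚ) < r := by exact_mod_cast hDel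
    have h2 : ((q * s : ℚ)) ≤ (m : ℚ) * r := by
      rw [div_le_iff₀ hr0] at h1; exact_mod_cast h1
    exact_mod_cast h2
  have hVrank : Module.finrank F (Fin q → Sig) ≤ m * r := by
    have : Module.finrank F (Fin q → Sig) = q * s := by
      simp [Module.finrank_pi_fintype, hs, Finset.sum_const, Fintype.card_fin]
    omega
  choose W hW using hlin
  have key : ∀ i, ∃ ψ : (Fin q → Sig) →ₗ[F] (Fin m → Del), LinearMap.ker ψ = W i :=
    fun i => aux_psi (W i) m hVrank
  choose ψ hψ using key
  refine ⟨m, fun ij => p ij.1 / m, fun ij => a ij.1,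
    fun ij u => decide (ψ ij.1 u ij.2 = 0), rfl, ?_, ?_, ?_, ?_, ?_, ?_⟩
  · intro ij; exact div_nonneg (hp0 ij.1) (le_of_lt hmR)
  · rw [Fintype.sum_prod_type]
    simp only [Finset.sum_const, Finset.card_univ, Fintype.card_fin, nsmul_eq_mul]
    rw [← hp1]
    congr 1; funext i; field_simp
  · intro w hw ij
    have hmem : (fun j => w (a ij.1 j)) ∈ W ij.1 := (hW ij.1 _).mp (hcomplete w hw ij.1)
    have : ψ ij.1 (fun j => w (a ij.1 j)) = 0 := by
      rw [← LinearMap.mem_ker, hψ]; exact hmem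
    simp [this]
  · intro ij
    refine ⟨LinearMap.ker ((LinearMap.proj ij.2).comp (ψ ij.1)), fun u => ?_⟩
    simp [LinearMap.mem_ker]
  · intro ij
    refine ⟨fun ℓ => ((LinearMap.proj ij.2).comp (ψ ij.1)).comp
        (LinearMap.single F (fun _ : Fin q => Sig) ℓ),
      fun v => decide ((∑ ℓ, v ℓ) = 0), fun u => ?_⟩
    have hu : u = ∑ ℓ, Pi.single ℓ (u ℓ) := (Finset.univ_sum_single u).symm
    have : ψ ij.1 u ij.2 = ∑ ℓ, ψ ij.1 (Pi.single ℓ (u ℓ)) ij.2 := by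
      conv_lhs => rw [hu]
      rw [map_sum]
      simp [Finset.sum_apply]
    simp only [LinearMap.comp_apply, LinearMap.proj_apply, LinearMap.single_apply]
    rw [this]
    exact decide_eq_decide.mpr Iff.rfl
  · intro w
    have h1 := hsound w
    set uu : I → Fin q → Sig := fun i => fun j => w (a i j) with huu
    have step : ∀ i, T i (uu i) = false →
        p i / m ≤ ∑ j with decide (ψ i (uu i) j = 0) = false, (p i / m : ℝ) := by
      intro i hi
      have hnot : uu i ∉ W i := by
        intro hmem
        have := (hW i (uu i)).mpr hmem
        rw [this] at hi; exact Bool.true_eq_false.mp hi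
      have : ψ i (uu i) ≠ 0 := by
        intro h0
        exact hnot (by rw [← hψ i]; exact h0)
      obtain ⟨j, hj⟩ : ∃ j, ψ i (uu i) j ≠ 0 := by
        by_contra hc
        push_neg at hc
        exact this (funext hc)
      calc p i / m = ∑ j' ∈ {j}, (p i / m : ℝ) := by simp
        _ ≤ _ := by
            apply Finset.sum_le_sum_of_subset_of_nonneg
            · intro x hx
              simp only [Finset.mem_singleton] at hx
              subst hx
              simp [hj]
            · intro x _ _; exact div_nonneg (hp0 i) (le_of_lt hmR)
    have main : (∑ i with T i (uu i) = false, p i) / m ≤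
        ∑ ij : I × Fin m with decide (ψ ij.1 (uu ij.1) ij.2 = 0) = false, (p ij.1 / m : ℝ) := by
      rw [Finset.sum_div]
      have : ∑ ij ∈ Finset.univ.filter
          (fun ij : I × Fin m => decide (ψ ij.1 (uu ij.1) ij.2 = 0) = false), (p ij.1 / m : ℝ)
          = ∑ i, ∑ j with decide (ψ i (uu i) j = 0) = false, (p i / m : ℝ) := by
        rw [Finset.sum_filter, Fintype.sum_prod_type]
        congr 1; funext i
        rw [Finset.sum_filter]
      rw [this]
      calc ∑ i with T i (uu i) = false, (p i / m)
          ≤ ∑ i, if T i (uu i) = false then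
              (∑ j with decide (ψ i (uu i) j = 0) = false, (p i / m : ℝ)) else 0 := by
            rw [Finset.sum_filter]
            apply Finset.sum_le_sum
            intro i _
            by_cases hi : T i (uu i) = false
            · simp only [hi, if_true]; exact step i hi
            · simp [hi]
        _ ≤ ∑ i, ∑ j with decide (ψ i (uu i) j = 0) = false, (p i / m : ℝ) := by
            apply Finset.sum_le_sum
            intro i _
            by_cases hi : T i (uu i) = false
            · simp [hi]
            · simp only [hi, if_false]
              exact Finset.sum_nonneg fun j _ => div_nonneg (hp0 i) (le_of_lt hmR)
    calc μ / m * ((⨅ c : C, hammingDist w (c : Fin n → Sig) : ℕ) : ℝ) / n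
        = (μ * ((⨅ c : C, hammingDist w (c : Fin n → Sig) : ℕ) : ℝ) / n) / m := by ring
      _ ≤ (∑ i with T i (uu i) = false, p i) / m := by
          exact div_le_div_of_nonneg_right h1 (le_of_lt hmR) |>.trans_eq rfl
      _ ≤ _ := main
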